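/- Let m(x) = ½(x−x_k)ᵀH(x−x_k) + gᵀ(x−x_k) + c be a quadratic on R^n with H symmetric. Then the squared L² norm of m over the ball B(x_k, r) equals V_n r^n · [ c² + (r²/(n+2)) (‖g‖₂² + c·Tr(H)) + (r⁴/(2(n+4)(n+2))) ‖H‖_F² + (r⁴/(4(n+4)(n+2))) (Tr H)² ], where V_n is the volume of the n-dimensional unit ball. -/

import Mathlib

open MeasureTheory Metric

variable {n : ℕ}

/-- integral over centered ball invariant under linear isometry equivalence -/
lemma setIntegral_ball_isometry (r : ℝ)
    (T : EuclideanSpace ℝ (Fin n) ≃ₗᵢ[ℝ] EuclideanSpace ℝ (Fin n))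
    (f : EuclideanSpace ℝ (Fin n) → ℝ) :
    ∫ x in closedBall (0 : EuclideanSpace ℝ (Fin n)) r, f (T x) =
      ∫ x in closedBall (0 : EuclideanSpace ℝ (Fin n)) r, f x := by
  have hpre : (T : EuclideanSpace ℝ (Fin n) → EuclideanSpace ℝ (Fin n)) ⁻¹' (closedBall 0 r) = closedBall 0 r := by
    ext x
    simp [mem_closedBall, dist_zero_right, T.norm_map]
  have h := T.measurePreserving.setIntegral_preimage_emb
    T.toMeasurableEquiv.measurableEmbedding f (closedBall 0 r)
  rwa [hpre] at h

/-- build a linear isometry involution from coordinates data -/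
noncomputable def involIso (f : EuclideanSpace ℝ (Fin n) → EuclideanSpace ℝ (Fin n))
    (hadd : ∀ x y, f (x + y) = f x + f y)
    (hsmul : ∀ (c : ℝ) x, f (c • x) = c • f x)
    (hinv : ∀ x, f (f x) = x)
    (hnorm : ∀ x, ∑ k, (f x k) ^ 2 = ∑ k, (x k) ^ 2) :
    EuclideanSpace ℝ (Fin n) ≃ₗᵢ[ℝ] EuclideanSpace ℝ (Fin n) where
  toFun := f
  invFun := f
  map_add' := hadd
  map_smul' := hsmul
  left_inv := hinv
  right_inv := hinv
  norm_map' := by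
    intro x
    rw [EuclideanSpace.norm_eq, EuclideanSpace.norm_eq]
    congr 1
    simpa [Real.norm_eq_abs, sq_abs] using hnorm x

noncomputable def negAt (i : Fin n) : EuclideanSpace ℝ (Fin n) ≃ₗᵢ[ℝ] EuclideanSpace ℝ (Fin n) :=
  involIso (fun x => WithLp.toLp 2 (fun k => if k = i then -x k else x k))
    (by intro x y; ext k; by_cases h : k = i <;> simp [h] <;> ring)
    (by intro c x; ext k; by_cases h : k = i <;> simp [h] <;> ring)
    (by intro x; ext k; by_cases h : k = i <;> simp [h])
    (by intro x; apply Finset.sum_congr rfl; intro k _; by_cases h : k = i <;> simp [h])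

@[simp] lemma negAt_apply (i : Fin n) (x : EuclideanSpace ℝ (Fin n)) (k : Fin n) :
    negAt i x k = if k = i then -x k else x k := rfl

noncomputable def swapAt (i j : Fin n) : EuclideanSpace ℝ (Fin n) ≃ₗᵢ[ℝ] EuclideanSpace ℝ (Fin n) :=
  involIso (fun x => WithLp.toLp 2 (fun k => x (Equiv.swap i j k)))
    (by intro x y; ext k; simp)
    (by intro c x; ext k; simp)
    (by intro x; ext k; show x ((Equiv.swap i j) ((Equiv.swap i j) k)) = x k
        rw [Equiv.swap_apply_self])
    (by intro x; exact Fintype.sum_equiv (Equiv.swap i j) _ _ (fun k => rfl))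

@[simp] lemma swapAt_apply (i j : Fin n) (x : EuclideanSpace ℝ (Fin n)) (k : Fin n) :
    swapAt i j x k = x (Equiv.swap i j k) := rfl

lemma sum_split_two {i j : Fin n} (hij : i ≠ j) (f : Fin n → ℝ) :
    ∑ k, f k = f i + (f j + ∑ k ∈ (Finset.univ.erase i).erase j, f k) := by
  rw [← Finset.add_sum_erase _ f (Finset.mem_univ i),
    ← Finset.add_sum_erase _ f (Finset.mem_erase.2 ⟨hij.symm, Finset.mem_univ j⟩)]

noncomputable def rotAt (i j : Fin n) (hij : i ≠ j) :
    EuclideanSpace ℝ (Fin n) ≃ₗᵢ[ℝ] EuclideanSpace ℝ (Fin n) :=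
  involIso (fun x => WithLp.toLp 2 (fun k => if k = i then (x i + x j) / Real.sqrt 2
      else if k = j then (x i - x j) / Real.sqrt 2 else x k))
    (by intro x y; ext k
        by_cases h : k = i
        · subst h; simp [hij, hij.symm]; ring
        · by_cases h' : k = j
          · subst h'; simp [h, hij, hij.symm]; ring
          · simp [h, h'])
    (by intro c x; ext k
        by_cases h : k = i
        · subst h; simp [hij, hij.symm]; ring
        · by_cases h' : k = j
          · subst h'; simp [h, hij, hij.symm]; ring
          · simp [h, h'])
    (by intro x; ext k
        have h2' : Real.sqrt 2 * Real.sqrt 2 = 2 := Real.mul_self_sqrt (by norm_num)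
        have key1 : ∀ a b : ℝ, ((a + b) / Real.sqrt 2 + (a - b) / Real.sqrt 2) / Real.sqrt 2 = a := by
          intro a b; rw [← add_div, div_div, h2']; ring
        have key2 : ∀ a b : ℝ, ((a + b) / Real.sqrt 2 - (a - b) / Real.sqrt 2) / Real.sqrt 2 = b := by
          intro a b; rw [← sub_div, div_div, h2']; ring
        by_cases h : k = i
        · subst h; simpa [hij, hij.symm] using key1 (x k) (x j)
        · by_cases h' : k = j
          · subst h'; simpa [h, hij, hij.symm] using key2 (x i) (x k)
          · simp [h, h'])
    (by intro x
        have h2 : Real.sqrt 2 ^ 2 = 2 := Real.sq_sqrt (by norm_num)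
        beta_reduce
        rw [sum_split_two hij
          (fun k => ((if k = i then (x i + x j) / Real.sqrt 2
            else if k = j then (x i - x j) / Real.sqrt 2 else x k)) ^ 2),
          sum_split_two hij (fun k => (x k) ^ 2)]
        have hrest : ∑ k ∈ (Finset.univ.erase i).erase j,
            (if k = i then (x i + x j) / Real.sqrt 2
              else if k = j then (x i - x j) / Real.sqrt 2 else x k) ^ 2
            = ∑ k ∈ (Finset.univ.erase i).erase j, (x k) ^ 2 := by
          apply Finset.sum_congr rfl
          intro k hk
          simp only [Finset.mem_erase] at hk
          simp [hk.1, hk.2.1]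
        rw [hrest]
        have e1 : (if i = i then (x i + x j) / Real.sqrt 2
            else if i = j then (x i - x j) / Real.sqrt 2 else x i) = (x i + x j) / Real.sqrt 2 := by
          simp
        have e2 : (if j = i then (x i + x j) / Real.sqrt 2
            else if j = j then (x i - x j) / Real.sqrt 2 else x j) = (x i - x j) / Real.sqrt 2 := by
          simp [hij.symm]
        rw [e1, e2]
        have : ((x i + x j) / Real.sqrt 2) ^ 2 + ((x i - x j) / Real.sqrt 2) ^ 2
            = (x i) ^ 2 + (x j) ^ 2 := by
          rw [div_pow, div_pow, h2]
          ring
        linarith)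

@[simp] lemma rotAt_apply (i j : Fin n) (hij : i ≠ j) (x : EuclideanSpace ℝ (Fin n)) (k : Fin n) :
    rotAt i j hij x k = if k = i then (x i + x j) / Real.sqrt 2
      else if k = j then (x i - x j) / Real.sqrt 2 else x k := rfl

lemma integral_norm_pow_ball (hn : 0 < n) {r : ℝ} (hr : 0 < r) (k : ℕ) :
    ∫ x in closedBall (0 : EuclideanSpace ℝ (Fin n)) r, ‖x‖ ^ k =
      (volume (closedBall (0 : EuclideanSpace ℝ (Fin n)) 1)).toReal *
        ((n : ℝ) / ((n : ℝ) + (k : ℝ))) * r ^ (n + k) := by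
  haveI : Nonempty (Fin n) := Fin.pos_iff_nonempty.1 hn
  haveI : Nontrivial (EuclideanSpace ℝ (Fin n)) := inferInstance
  have hdim : Module.finrank ℝ (EuclideanSpace ℝ (Fin n)) = n := finrank_euclideanSpace_fin
  have hball : (volume (closedBall (0 : EuclideanSpace ℝ (Fin n)) 1)) =
      volume (ball (0 : EuclideanSpace ℝ (Fin n)) 1) :=
    Measure.addHaar_closedBall_eq_addHaar_ball volume 0 1
  rw [← integral_indicator measurableSet_closedBall]
  have hpt : ∀ x : EuclideanSpace ℝ (Fin n),
      (closedBall (0 : EuclideanSpace ℝ (Fin n)) r).indicator (fun x => ‖x‖ ^ k) x =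
        (Set.Icc (0:ℝ) r).indicator (fun y => y ^ k) ‖x‖ := by
    intro x
    by_cases h : ‖x‖ ≤ r <;>
      simp [Set.indicator_apply, mem_closedBall_zero_iff, Set.mem_Icc, norm_nonneg, h]
  simp only [hpt]
  rw [integral_fun_norm_addHaar volume (fun y => (Set.Icc (0:ℝ) r).indicator (fun y => y ^ k) y)]
  have hpt2 : ∀ y : ℝ, y ^ (Module.finrank ℝ (EuclideanSpace ℝ (Fin n)) - 1) •
      (Set.Icc (0:ℝ) r).indicator (fun y => y ^ k) y =
        (Set.Icc (0:ℝ) r).indicator (fun y => y ^ (n - 1 + k)) y := by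
    intro y
    rw [hdim]
    by_cases h : y ∈ Set.Icc (0:ℝ) r <;>
      simp [Set.indicator_apply, h, smul_eq_mul, ← pow_add]
  simp only [hpt2]
  rw [setIntegral_indicator measurableSet_Icc]
  have hset : Set.Ioi (0:ℝ) ∩ Set.Icc 0 r = Set.Ioc 0 r := by
    ext y
    simp only [Set.mem_inter_iff, Set.mem_Icc, Set.mem_Ioi, Set.mem_Ioc]
    constructor
    · rintro ⟨h3, _, h2⟩; exact ⟨h3, h2⟩
    · rintro ⟨h1, h2⟩; exact ⟨h1, h1.le, h2⟩
  rw [hset, ← intervalIntegral.integral_of_le hr.le, integral_pow]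
  have hnk : n - 1 + k + 1 = n + k := by omega
  rw [hnk, hdim, nsmul_eq_mul, smul_eq_mul, hball]
  have : ((n - 1 + k : ℕ) : ℝ) + 1 = (n : ℝ) + (k : ℝ) := by
    push_cast [Nat.cast_sub hn]
    ring
  rw [this]
  have hpos : (0:ℝ) < (n : ℝ) + (k : ℝ) := by positivity
  field_simp
  rw [zero_pow (by omega : n + k ≠ 0), measureReal_def]
  ring

lemma integrableOn_ball_of_continuous {r : ℝ} {f : EuclideanSpace ℝ (Fin n) → ℝ}
    (hf : Continuous f) :
    IntegrableOn f (closedBall (0 : EuclideanSpace ℝ (Fin n)) r) volume :=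
  hf.continuousOn.integrableOn_compact (isCompact_closedBall _ _)

lemma integral_ball_odd_zero (r : ℝ)
    (T : EuclideanSpace ℝ (Fin n) ≃ₗᵢ[ℝ] EuclideanSpace ℝ (Fin n))
    (f : EuclideanSpace ℝ (Fin n) → ℝ) (hT : ∀ x, f (T x) = - f x) :
    ∫ x in closedBall (0 : EuclideanSpace ℝ (Fin n)) r, f x = 0 := by
  have h := setIntegral_ball_isometry r T f
  simp only [hT, integral_neg] at h
  linarith

lemma negAt_mul (m : Fin n) (x : EuclideanSpace ℝ (Fin n)) (a : Fin n) :
    negAt m x a = (if a = m then (-1 : ℝ) else 1) * x a := by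
  by_cases h : a = m <;> simp [h]

lemma integral_quad_eq_zero (r : ℝ) (m i j k l : Fin n)
    (hsign : (if i = m then (-1:ℝ) else 1) * (if j = m then (-1:ℝ) else 1) *
      (if k = m then (-1:ℝ) else 1) * (if l = m then (-1:ℝ) else 1) = -1) :
    ∫ x in closedBall (0 : EuclideanSpace ℝ (Fin n)) r, x i * x j * x k * x l = 0 := by
  apply integral_ball_odd_zero r (negAt m)
  intro x
  show negAt m x i * negAt m x j * negAt m x k * negAt m x l = _
  rw [negAt_mul, negAt_mul, negAt_mul, negAt_mul]
  calc (if i = m then (-1:ℝ) else 1) * x i * ((if j = m then (-1:ℝ) else 1) * x j) *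
        ((if k = m then (-1:ℝ) else 1) * x k) * ((if l = m then (-1:ℝ) else 1) * x l)
      = ((if i = m then (-1:ℝ) else 1) * (if j = m then (-1:ℝ) else 1) *
        (if k = m then (-1:ℝ) else 1) * (if l = m then (-1:ℝ) else 1)) *
        (x i * x j * x k * x l) := by ring
    _ = _ := by rw [hsign]; ring

lemma integral_triple_eq_zero (r : ℝ) (m i j k : Fin n)
    (hsign : (if i = m then (-1:ℝ) else 1) * (if j = m then (-1:ℝ) else 1) *
      (if k = m then (-1:ℝ) else 1) = -1) :
    ∫ x in closedBall (0 : EuclideanSpace ℝ (Fin n)) r, x i * x j * x k = 0 := by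
  apply integral_ball_odd_zero r (negAt m)
  intro x
  show negAt m x i * negAt m x j * negAt m x k = _
  rw [negAt_mul, negAt_mul, negAt_mul]
  calc (if i = m then (-1:ℝ) else 1) * x i * ((if j = m then (-1:ℝ) else 1) * x j) *
        ((if k = m then (-1:ℝ) else 1) * x k)
      = ((if i = m then (-1:ℝ) else 1) * (if j = m then (-1:ℝ) else 1) *
        (if k = m then (-1:ℝ) else 1)) * (x i * x j * x k) := by ring
    _ = _ := by rw [hsign]; ring

lemma integral_single_eq_zero (r : ℝ) (i : Fin n) :
    ∫ x in closedBall (0 : EuclideanSpace ℝ (Fin n)) r, x i = 0 := by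
  apply integral_ball_odd_zero r (negAt i)
  intro x
  show negAt i x i = _
  simp

lemma norm_sq_eq_sum (x : EuclideanSpace ℝ (Fin n)) : ‖x‖ ^ 2 = ∑ k, (x k) ^ 2 := by
  rw [EuclideanSpace.norm_eq, Real.sq_sqrt (by positivity)]
  simp [Real.norm_eq_abs, sq_abs]

lemma moment_sq {r : ℝ} (hr : 0 < r) (i : Fin n) :
    ∫ x in closedBall (0 : EuclideanSpace ℝ (Fin n)) r, (x i) ^ 2 =
      (volume (closedBall (0 : EuclideanSpace ℝ (Fin n)) 1)).toReal / ((n : ℝ) + 2) * r ^ (n + 2) := by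
  have hn : 0 < n := i.pos
  have hswap : ∀ j : Fin n,
      (∫ x in closedBall (0 : EuclideanSpace ℝ (Fin n)) r, (x j) ^ 2) =
        ∫ x in closedBall (0 : EuclideanSpace ℝ (Fin n)) r, (x i) ^ 2 := by
    intro j
    have h := setIntegral_ball_isometry r (swapAt i j) (fun x => (x i) ^ 2)
    simp only [swapAt_apply] at h
    rw [show ((Equiv.swap i j) i) = j from Equiv.swap_apply_left i j] at h
    exact h
  have hsum : (∫ x in closedBall (0 : EuclideanSpace ℝ (Fin n)) r, ∑ j, (x j) ^ 2) =
      ∑ j : Fin n, ∫ x in closedBall (0 : EuclideanSpace ℝ (Fin n)) r, (x j) ^ 2 :=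
    integral_finset_sum _ (fun j _ => integrableOn_ball_of_continuous (by fun_prop))
  have hnorm : (∫ x in closedBall (0 : EuclideanSpace ℝ (Fin n)) r, ∑ j, (x j) ^ 2) =
      ∫ x in closedBall (0 : EuclideanSpace ℝ (Fin n)) r, ‖x‖ ^ 2 := by
    congr 1
    funext x
    rw [norm_sq_eq_sum]
  rw [hnorm, integral_norm_pow_ball hn hr 2] at hsum
  rw [Finset.sum_congr rfl (fun j _ => hswap j), Finset.sum_const, Finset.card_univ,
    Fintype.card_fin, nsmul_eq_mul] at hsum
  have hn' : (0:ℝ) < n := by exact_mod_cast hn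
  have h2 : (0:ℝ) < (n:ℝ) + 2 := by positivity
  field_simp at hsum ⊢
  push_cast at hsum ⊢
  nlinarith [hsum]

lemma moment_mixed_sq {r : ℝ} {i j : Fin n} (hij : i ≠ j) :
    ∫ x in closedBall (0 : EuclideanSpace ℝ (Fin n)) r, x i * x j = 0 := by
  apply integral_ball_odd_zero r (negAt i)
  intro x
  show negAt i x i * negAt i x j = _
  simp [hij.symm]

lemma moment_fourth_rot {r : ℝ} {i j : Fin n} (hij : i ≠ j) :
    ∫ x in closedBall (0 : EuclideanSpace ℝ (Fin n)) r, (x i) ^ 4 =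
      3 * ∫ x in closedBall (0 : EuclideanSpace ℝ (Fin n)) r, (x i) ^ 2 * (x j) ^ 2 := by
  have h := setIntegral_ball_isometry r (rotAt i j hij) (fun x => (x i) ^ 4)
  have hswap4 : (∫ x in closedBall (0 : EuclideanSpace ℝ (Fin n)) r, (x j) ^ 4) =
      ∫ x in closedBall (0 : EuclideanSpace ℝ (Fin n)) r, (x i) ^ 4 := by
    have h2 := setIntegral_ball_isometry r (swapAt i j) (fun x => (x i) ^ 4)
    simp only [swapAt_apply] at h2
    rw [show ((Equiv.swap i j) i) = j from Equiv.swap_apply_left i j] at h2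
    exact h2
  have hexp : (fun x : EuclideanSpace ℝ (Fin n) => ((rotAt i j hij x) i) ^ 4) =
      fun x : EuclideanSpace ℝ (Fin n) =>
        1/4 * (x i) ^ 4 + 1/4 * (x j) ^ 4 + 3/2 * ((x i) ^ 2 * (x j) ^ 2) +
          x i * x i * x i * x j + x i * x j * x j * x j := by
    funext x
    have h4 : Real.sqrt 2 ^ 4 = 4 := by
      rw [show (4:ℕ) = 2*2 from rfl, pow_mul, Real.sq_sqrt (by norm_num : (0:ℝ) ≤ 2)]
      norm_num
    rw [rotAt_apply, if_pos rfl, div_pow, h4]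
    ring
  rw [show (fun x : EuclideanSpace ℝ (Fin n) => ((rotAt i j hij) x i) ^ 4) =
    (fun x : EuclideanSpace ℝ (Fin n) => ((rotAt i j hij x) i) ^ 4) from rfl, hexp] at h
  rw [integral_add (integrableOn_ball_of_continuous (by fun_prop))
      (integrableOn_ball_of_continuous (by fun_prop)),
    integral_add (integrableOn_ball_of_continuous (by fun_prop))
      (integrableOn_ball_of_continuous (by fun_prop)),
    integral_add (integrableOn_ball_of_continuous (by fun_prop))
      (integrableOn_ball_of_continuous (by fun_prop)),
    integral_add (integrableOn_ball_of_continuous (by fun_prop))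
      (integrableOn_ball_of_continuous (by fun_prop)),
    integral_const_mul, integral_const_mul, integral_const_mul] at h
  rw [integral_quad_eq_zero r j i i i j (by simp [hij]),
    integral_quad_eq_zero r j i j j j (by simp [hij]), hswap4] at h
  linarith

lemma moment_sq_norm {r : ℝ} (hr : 0 < r) (i : Fin n) :
    ∫ x in closedBall (0 : EuclideanSpace ℝ (Fin n)) r, (x i) ^ 2 * ‖x‖ ^ 2 =
      (volume (closedBall (0 : EuclideanSpace ℝ (Fin n)) 1)).toReal *
        ((n : ℝ) / ((n : ℝ) + 4)) * r ^ (n + 4) / (n : ℝ) := by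
  have hn : 0 < n := i.pos
  have hswap : ∀ j : Fin n,
      (∫ x in closedBall (0 : EuclideanSpace ℝ (Fin n)) r, (x j) ^ 2 * ‖x‖ ^ 2) =
        ∫ x in closedBall (0 : EuclideanSpace ℝ (Fin n)) r, (x i) ^ 2 * ‖x‖ ^ 2 := by
    intro j
    have h := setIntegral_ball_isometry r (swapAt i j) (fun x => (x i) ^ 2 * ‖x‖ ^ 2)
    simp only [swapAt_apply, LinearIsometryEquiv.norm_map] at h
    rw [show ((Equiv.swap i j) i) = j from Equiv.swap_apply_left i j] at h
    exact h
  have hsum : (∫ x in closedBall (0 : EuclideanSpace ℝ (Fin n)) r, ∑ j, (x j) ^ 2 * ‖x‖ ^ 2) =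
      ∑ j : Fin n, ∫ x in closedBall (0 : EuclideanSpace ℝ (Fin n)) r, (x j) ^ 2 * ‖x‖ ^ 2 :=
    integral_finset_sum _ (fun j _ => integrableOn_ball_of_continuous (by fun_prop))
  have hnorm : (∫ x in closedBall (0 : EuclideanSpace ℝ (Fin n)) r, ∑ j, (x j) ^ 2 * ‖x‖ ^ 2) =
      ∫ x in closedBall (0 : EuclideanSpace ℝ (Fin n)) r, ‖x‖ ^ 4 := by
    congr 1
    funext x
    rw [← Finset.sum_mul, ← norm_sq_eq_sum]
    ring
  rw [hnorm, integral_norm_pow_ball hn hr 4] at hsum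
  rw [Finset.sum_congr rfl (fun j _ => hswap j), Finset.sum_const, Finset.card_univ,
    Fintype.card_fin, nsmul_eq_mul] at hsum
  have hn' : (0:ℝ) < n := by exact_mod_cast hn
  field_simp at hsum ⊢
  push_cast at hsum
  linarith

lemma moment_fourth_mixed {r : ℝ} (hr : 0 < r) {i j : Fin n} (hij : i ≠ j) :
    ∫ x in closedBall (0 : EuclideanSpace ℝ (Fin n)) r, (x i) ^ 2 * (x j) ^ 2 =
      (volume (closedBall (0 : EuclideanSpace ℝ (Fin n)) 1)).toReal /
        (((n : ℝ) + 2) * ((n : ℝ) + 4)) * r ^ (n + 4) := by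
  have hn : 0 < n := i.pos
  have hkswap : ∀ k : Fin n, k ≠ i →
      (∫ x in closedBall (0 : EuclideanSpace ℝ (Fin n)) r, (x i) ^ 2 * (x k) ^ 2) =
        ∫ x in closedBall (0 : EuclideanSpace ℝ (Fin n)) r, (x i) ^ 2 * (x j) ^ 2 := by
    intro k hk
    have h := setIntegral_ball_isometry r (swapAt j k) (fun x => (x i) ^ 2 * (x j) ^ 2)
    simp only [swapAt_apply] at h
    rw [show ((Equiv.swap j k) i) = i from Equiv.swap_apply_of_ne_of_ne hij (Ne.symm hk),
      show ((Equiv.swap j k) j) = k from Equiv.swap_apply_left j k] at h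
    exact h
  have hexpand : (∫ x in closedBall (0 : EuclideanSpace ℝ (Fin n)) r, (x i) ^ 2 * ‖x‖ ^ 2) =
      ∑ k : Fin n, ∫ x in closedBall (0 : EuclideanSpace ℝ (Fin n)) r, (x i) ^ 2 * (x k) ^ 2 := by
    rw [← integral_finset_sum _ (fun k _ => integrableOn_ball_of_continuous (by fun_prop))]
    congr 1
    funext x
    rw [norm_sq_eq_sum, Finset.mul_sum]
  have hii : (∫ x in closedBall (0 : EuclideanSpace ℝ (Fin n)) r, (x i) ^ 2 * (x i) ^ 2) =
      ∫ x in closedBall (0 : EuclideanSpace ℝ (Fin n)) r, (x i) ^ 4 := by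
    congr 1
    funext x
    ring
  rw [moment_sq_norm hr i, ← Finset.add_sum_erase _ _ (Finset.mem_univ i), hii,
    moment_fourth_rot hij,
    Finset.sum_congr rfl (fun k hk => hkswap k (Finset.mem_erase.1 hk).1),
    Finset.sum_const, Finset.card_erase_of_mem (Finset.mem_univ i), Finset.card_univ,
    Fintype.card_fin, nsmul_eq_mul] at hexpand
  have hn' : (0:ℝ) < n := by exact_mod_cast hn
  have hcast : ((n - 1 : ℕ) : ℝ) = (n : ℝ) - 1 := by
    push_cast [Nat.cast_sub hn]
    ring
  rw [hcast] at hexpand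
  have h2 : (0:ℝ) < (n:ℝ) + 2 := by positivity
  have h4 : (0:ℝ) < (n:ℝ) + 4 := by positivity
  field_simp at hexpand ⊢
  nlinarith [hexpand]

lemma moment_fourth {r : ℝ} (hr : 0 < r) (i : Fin n) :
    ∫ x in closedBall (0 : EuclideanSpace ℝ (Fin n)) r, (x i) ^ 4 =
      3 * ((volume (closedBall (0 : EuclideanSpace ℝ (Fin n)) 1)).toReal /
        (((n : ℝ) + 2) * ((n : ℝ) + 4)) * r ^ (n + 4)) := by
  by_cases hex : ∃ j : Fin n, j ≠ i
  · obtain ⟨j, hj⟩ := hex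
    rw [moment_fourth_rot (Ne.symm hj), moment_fourth_mixed hr (Ne.symm hj)]
  · push_neg at hex
    have hn1 : n = 1 := by
      have := Fintype.card_eq_one_iff.2 ⟨i, hex⟩
      rwa [Fintype.card_fin] at this
    subst hn1
    have hpt : (fun x : EuclideanSpace ℝ (Fin 1) => (x i) ^ 4) =
        fun x : EuclideanSpace ℝ (Fin 1) => ‖x‖ ^ 4 := by
      funext x
      have h1 : ‖x‖ ^ 2 = (x i) ^ 2 := by
        rw [norm_sq_eq_sum]
        rw [show (Finset.univ : Finset (Fin 1)) = {i} from Finset.eq_singleton_iff_unique_mem.2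
          ⟨Finset.mem_univ i, fun k _ => hex k⟩, Finset.sum_singleton]
      calc (x i) ^ 4 = ((x i) ^ 2) ^ 2 := by ring
        _ = (‖x‖ ^ 2) ^ 2 := by rw [h1]
        _ = ‖x‖ ^ 4 := by ring
    rw [hpt, integral_norm_pow_ball (by norm_num) hr 4]
    push_cast
    ring

lemma moment_pair {r : ℝ} (hr : 0 < r) (i j : Fin n) :
    ∫ x in closedBall (0 : EuclideanSpace ℝ (Fin n)) r, x i * x j =
      (if i = j then (1:ℝ) else 0) *
        ((volume (closedBall (0 : EuclideanSpace ℝ (Fin n)) 1)).toReal / ((n : ℝ) + 2) *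
          r ^ (n + 2)) := by
  by_cases h : i = j
  · subst h
    rw [if_pos rfl, one_mul, show (fun x : EuclideanSpace ℝ (Fin n) => x i * x i) =
      (fun x : EuclideanSpace ℝ (Fin n) => (x i) ^ 2) from funext fun x => by ring]
    exact moment_sq hr i
  · rw [moment_mixed_sq h, if_neg h, zero_mul]

lemma moment_triple (r : ℝ) (i j k : Fin n) :
    ∫ x in closedBall (0 : EuclideanSpace ℝ (Fin n)) r, x i * x j * x k = 0 := by
  by_cases hij : i = j
  · subst hij
    by_cases hik : i = k
    · subst hik
      exact integral_triple_eq_zero r i i i i (by norm_num)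
    · exact integral_triple_eq_zero r k i i k (by norm_num [hik])
  · by_cases hik : i = k
    · subst hik
      exact integral_triple_eq_zero r j i j i (by norm_num [hij])
    · exact integral_triple_eq_zero r i i j k
        (by norm_num [Ne.symm hij, Ne.symm hik])

lemma moment_quad {r : ℝ} (hr : 0 < r) (i j k l : Fin n) :
    ∫ x in closedBall (0 : EuclideanSpace ℝ (Fin n)) r, x i * x j * x k * x l =
      ((volume (closedBall (0 : EuclideanSpace ℝ (Fin n)) 1)).toReal /
          (((n : ℝ) + 2) * ((n : ℝ) + 4)) * r ^ (n + 4)) *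
        ((if i = j then (1:ℝ) else 0) * (if k = l then (1:ℝ) else 0) +
          (if i = k then (1:ℝ) else 0) * (if j = l then (1:ℝ) else 0) +
          (if i = l then (1:ℝ) else 0) * (if j = k then (1:ℝ) else 0)) := by
  by_cases hij : i = j
  · subst hij
    by_cases hkl : k = l
    · subst hkl
      by_cases hik : i = k
      · subst hik
        rw [show (fun x : EuclideanSpace ℝ (Fin n) => x i * x i * x i * x i) =
          (fun x : EuclideanSpace ℝ (Fin n) => (x i) ^ 4) from funext fun x => by ring,
          moment_fourth hr i]
        simp
        ring
      · rw [show (fun x : EuclideanSpace ℝ (Fin n) => x i * x i * x k * x k) =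
          (fun x : EuclideanSpace ℝ (Fin n) => (x i) ^ 2 * (x k) ^ 2) from funext fun x => by ring,
          moment_fourth_mixed hr hik]
        simp [hik]
    · by_cases hki : k = i
      · subst hki
        rw [integral_quad_eq_zero r l k k k l (by norm_num [hkl])]
        simp [hkl]
      · rw [integral_quad_eq_zero r k i i k l
          (by norm_num [Ne.symm hki, Ne.symm hkl])]
        simp [hkl, hki, Ne.symm hki]
  · by_cases hik : i = k
    · subst hik
      by_cases hjl : j = l
      · subst hjl
        rw [show (fun x : EuclideanSpace ℝ (Fin n) => x i * x j * x i * x j) =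
          (fun x : EuclideanSpace ℝ (Fin n) => (x i) ^ 2 * (x j) ^ 2) from funext fun x => by ring,
          moment_fourth_mixed hr hij]
        simp [hij, Ne.symm hij]
      · rw [integral_quad_eq_zero r j i j i l (by norm_num [hij, Ne.symm hjl])]
        simp [hij, hjl, Ne.symm hij]
    · by_cases hil : i = l
      · subst hil
        by_cases hjk : j = k
        · subst hjk
          rw [show (fun x : EuclideanSpace ℝ (Fin n) => x i * x j * x j * x i) =
            (fun x : EuclideanSpace ℝ (Fin n) => (x i) ^ 2 * (x j) ^ 2) from funext fun x => by ring,
            moment_fourth_mixed hr hij]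
          simp [hij, Ne.symm hij]
        · rw [integral_quad_eq_zero r j i j k i (by norm_num [hij, Ne.symm hjk])]
          simp [hij, hjk, Ne.symm hij]
      · rw [integral_quad_eq_zero r i i j k l
          (by norm_num [Ne.symm hij, Ne.symm hik, Ne.symm hil])]
        simp [hij, hik, hil]

lemma sum_eval_QQ {n : ℕ} (H : Matrix (Fin n) (Fin n) ℝ) (hH : H.IsSymm) (b0 : ℝ) :
    (∑ i, ∑ j, ∑ k, ∑ l, H i j * H k l *
      (b0 * ((if i = j then (1:ℝ) else 0) * (if k = l then (1:ℝ) else 0) +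
        (if i = k then (1:ℝ) else 0) * (if j = l then (1:ℝ) else 0) +
        (if i = l then (1:ℝ) else 0) * (if j = k then (1:ℝ) else 0)))) =
      b0 * (H.trace ^ 2 + 2 * ∑ i, ∑ j, (H i j) ^ 2) := by
  have hsym : ∀ i j, H j i = H i j := fun i j => hH.apply i j
  have hsplit : ∀ i j k l : Fin n, H i j * H k l *
      (b0 * ((if i = j then (1:ℝ) else 0) * (if k = l then (1:ℝ) else 0) +
        (if i = k then (1:ℝ) else 0) * (if j = l then (1:ℝ) else 0) +
        (if i = l then (1:ℝ) else 0) * (if j = k then (1:ℝ) else 0))) =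
      b0 * ((if i = j then (1:ℝ) else 0) * (if k = l then (1:ℝ) else 0) * (H i j * H k l)) +
      b0 * ((if i = k then (1:ℝ) else 0) * (if j = l then (1:ℝ) else 0) * (H i j * H k l)) +
      b0 * ((if i = l then (1:ℝ) else 0) * (if j = k then (1:ℝ) else 0) * (H i j * H k l)) :=
    fun i j k l => by ring
  simp only [hsplit, Finset.sum_add_distrib, ← Finset.mul_sum]
  have h1 : (∑ i, ∑ j, ∑ k, ∑ l, ((if i = j then (1:ℝ) else 0) * (if k = l then (1:ℝ) else 0) *
      (H i j * H k l))) = H.trace ^ 2 := by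
    simp [Finset.mul_sum, ite_mul, Matrix.trace, Matrix.diag, Finset.sum_ite_eq,
      Finset.sum_ite_eq', sq, Finset.sum_mul]
    exact Finset.sum_congr rfl fun i _ => Finset.sum_congr rfl fun j _ => mul_comm _ _
  have h2 : (∑ i, ∑ j, ∑ k, ∑ l, ((if i = k then (1:ℝ) else 0) * (if j = l then (1:ℝ) else 0) *
      (H i j * H k l))) = ∑ i, ∑ j, (H i j) ^ 2 := by
    simp [Finset.mul_sum, ite_mul, Finset.sum_ite_eq, Finset.sum_ite_eq', sq]
  have h3 : (∑ i, ∑ j, ∑ k, ∑ l, ((if i = l then (1:ℝ) else 0) * (if j = k then (1:ℝ) else 0) *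
      (H i j * H k l))) = ∑ i, ∑ j, (H i j) ^ 2 := by
    simp only [ite_mul, one_mul, zero_mul, Finset.sum_ite_eq, Finset.sum_ite_eq',
      Finset.mem_univ, if_true]
    exact Finset.sum_congr rfl fun i _ => Finset.sum_congr rfl fun j _ => by
      rw [hsym i j, sq]
  rw [h1, h2, h3]
  ring

theorem quadratic_L2_norm_over_ball {n : ℕ}
    (xk : EuclideanSpace ℝ (Fin n)) (r : ℝ) (hr : 0 < r)
    (H : Matrix (Fin n) (Fin n) ℝ) (hH : H.IsSymm) (g : Fin n → ℝ) (c : ℝ)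
    (Vn : ℝ) (hVn : Vn = (volume (Metric.closedBall (0 : EuclideanSpace ℝ (Fin n)) 1)).toReal) :
    (∫ x in Metric.closedBall xk r,
        ((1 / 2) * (∑ i, ∑ j, (x i - xk i) * H i j * (x j - xk j)) +
          (∑ i, g i * (x i - xk i)) + c) ^ 2) =
      Vn * r ^ n *
        (c ^ 2 + (r ^ 2 / ((n : ℝ) + 2)) * ((∑ i, (g i) ^ 2) + c * H.trace) +
          (r ^ 4 / (2 * ((n : ℝ) + 4) * ((n : ℝ) + 2))) * (∑ i, ∑ j, (H i j) ^ 2) +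
          (r ^ 4 / (4 * ((n : ℝ) + 4) * ((n : ℝ) + 2))) * H.trace ^ 2) := by
  rcases Nat.eq_zero_or_pos n with hn0 | hn0
  · subst hn0
    have h1 : Metric.closedBall xk r = Set.univ := by
      ext x
      simp only [Metric.mem_closedBall, Set.mem_univ, iff_true]
      have hd : dist x xk = 0 := by rw [Subsingleton.elim x xk]; exact dist_self _
      rw [hd]; exact hr.le
    have h2 : Metric.closedBall (0 : EuclideanSpace ℝ (Fin 0)) 1 = Set.univ := by
      ext x
      simp only [Metric.mem_closedBall, Set.mem_univ, iff_true]
      have hd : dist x 0 = 0 := by rw [Subsingleton.elim x (0 : EuclideanSpace ℝ (Fin 0))]; exact dist_self _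
      rw [hd]; norm_num
    simp only [Finset.univ_eq_empty, Finset.sum_empty, Matrix.trace, Matrix.diag, mul_zero,
      zero_add, add_zero, pow_zero, mul_one]
    rw [h1, hVn, h2, MeasureTheory.setIntegral_univ, MeasureTheory.integral_const]
    simp [smul_eq_mul, measureReal_def]
  -- main case
  haveI : Nonempty (Fin n) := Fin.pos_iff_nonempty.1 hn0
  have hmp : MeasurePreserving (fun y : EuclideanSpace ℝ (Fin n) => y + xk) volume volume :=
    measurePreserving_add_right volume xk
  have hemb : MeasurableEmbedding (fun y : EuclideanSpace ℝ (Fin n) => y + xk) :=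
    (MeasurableEquiv.addRight xk).measurableEmbedding
  have hset : (fun y : EuclideanSpace ℝ (Fin n) => y + xk) ⁻¹' Metric.closedBall xk r =
      Metric.closedBall 0 r := by
    ext y
    simp [Metric.mem_closedBall, dist_eq_norm]
  have htrans := hmp.setIntegral_preimage_emb hemb
    (fun x => ((1 / 2) * (∑ i, ∑ j, (x i - xk i) * H i j * (x j - xk j)) +
      (∑ i, g i * (x i - xk i)) + c) ^ 2) (Metric.closedBall xk r)
  rw [hset] at htrans
  rw [← htrans]
  simp only [PiLp.add_apply, add_sub_cancel_right]
  haveI : Nontrivial (EuclideanSpace ℝ (Fin n)) := inferInstance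
  have hvol : (volume (Metric.closedBall (0 : EuclideanSpace ℝ (Fin n)) r)).toReal =
      (volume (Metric.closedBall (0 : EuclideanSpace ℝ (Fin n)) 1)).toReal * r ^ n := by
    rw [Measure.addHaar_closedBall volume 0 hr.le,
      ← Measure.addHaar_closedBall_eq_addHaar_ball volume (0 : EuclideanSpace ℝ (Fin n)) 1,
      ENNReal.toReal_mul, ENNReal.toReal_ofReal (by positivity), finrank_euclideanSpace_fin]
    ring
  have hpoint : (fun y : EuclideanSpace ℝ (Fin n) =>
      ((1 / 2) * (∑ i, ∑ j, y i * H i j * y j) + (∑ i, g i * y i) + c) ^ 2) =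
      fun y : EuclideanSpace ℝ (Fin n) =>
        1/4 * ((∑ i, ∑ j, y i * H i j * y j) * (∑ i, ∑ j, y i * H i j * y j)) +
        (∑ i, g i * y i) * (∑ i, g i * y i) +
        (∑ i, ∑ j, y i * H i j * y j) * (∑ i, g i * y i) +
        c * (∑ i, ∑ j, y i * H i j * y j) +
        (2*c) * (∑ i, g i * y i) + c^2 := funext fun y => by ring
  rw [hpoint]
  rw [integral_add (integrableOn_ball_of_continuous (by fun_prop))
      (integrableOn_ball_of_continuous (by fun_prop)),
    integral_add (integrableOn_ball_of_continuous (by fun_prop))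
      (integrableOn_ball_of_continuous (by fun_prop)),
    integral_add (integrableOn_ball_of_continuous (by fun_prop))
      (integrableOn_ball_of_continuous (by fun_prop)),
    integral_add (integrableOn_ball_of_continuous (by fun_prop))
      (integrableOn_ball_of_continuous (by fun_prop)),
    integral_add (integrableOn_ball_of_continuous (by fun_prop))
      (integrableOn_ball_of_continuous (by fun_prop))]
  have pQ2 : (∫ y in Metric.closedBall (0 : EuclideanSpace ℝ (Fin n)) r,
      (∑ i, ∑ j, y i * H i j * y j) * (∑ i, ∑ j, y i * H i j * y j)) =
      (volume (Metric.closedBall (0 : EuclideanSpace ℝ (Fin n)) 1)).toReal /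
        (((n:ℝ)+2) * ((n:ℝ)+4)) * r ^ (n+4) * (H.trace ^ 2 + 2 * ∑ i, ∑ j, (H i j)^2) := by
    rw [show (fun y : EuclideanSpace ℝ (Fin n) =>
        (∑ i, ∑ j, y i * H i j * y j) * (∑ i, ∑ j, y i * H i j * y j)) =
        fun y : EuclideanSpace ℝ (Fin n) =>
          ∑ i, ∑ j, ∑ k, ∑ l, H i j * H k l * (y i * y j * y k * y l) from
      funext fun y => by
        simp only [Finset.sum_mul, Finset.mul_sum]
        exact Finset.sum_congr rfl fun i _ => Finset.sum_congr rfl fun j _ =>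
          Finset.sum_congr rfl fun k _ => Finset.sum_congr rfl fun l _ => by ring]
    rw [integral_finset_sum _ (fun i _ => integrableOn_ball_of_continuous (by fun_prop)),
      Finset.sum_congr rfl fun i _ =>
        integral_finset_sum _ (fun j _ => integrableOn_ball_of_continuous (by fun_prop)),
      Finset.sum_congr rfl fun i _ => Finset.sum_congr rfl fun j _ =>
        integral_finset_sum _ (fun k _ => integrableOn_ball_of_continuous (by fun_prop)),
      Finset.sum_congr rfl fun i _ => Finset.sum_congr rfl fun j _ => Finset.sum_congr rfl fun k _ =>
        integral_finset_sum _ (fun l _ => integrableOn_ball_of_continuous (by fun_prop)),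
      Finset.sum_congr rfl fun i _ => Finset.sum_congr rfl fun j _ => Finset.sum_congr rfl fun k _ =>
        Finset.sum_congr rfl fun l _ => integral_const_mul _ _,
      Finset.sum_congr rfl fun i _ => Finset.sum_congr rfl fun j _ => Finset.sum_congr rfl fun k _ =>
        Finset.sum_congr rfl fun l _ => by rw [moment_quad hr i j k l]]
    exact sum_eval_QQ H hH _
  have pL2 : (∫ y in Metric.closedBall (0 : EuclideanSpace ℝ (Fin n)) r,
      (∑ i, g i * y i) * (∑ i, g i * y i)) =
      (volume (Metric.closedBall (0 : EuclideanSpace ℝ (Fin n)) 1)).toReal / ((n:ℝ)+2) *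
        r ^ (n+2) * (∑ i, (g i)^2) := by
    rw [show (fun y : EuclideanSpace ℝ (Fin n) => (∑ i, g i * y i) * (∑ i, g i * y i)) =
        fun y : EuclideanSpace ℝ (Fin n) => ∑ i, ∑ j, (g i * g j) * (y i * y j) from
      funext fun y => by
        simp only [Finset.sum_mul, Finset.mul_sum]
        exact Finset.sum_congr rfl fun i _ => Finset.sum_congr rfl fun j _ => by ring]
    rw [integral_finset_sum _ (fun i _ => integrableOn_ball_of_continuous (by fun_prop)),
      Finset.sum_congr rfl fun i _ =>
        integral_finset_sum _ (fun j _ => integrableOn_ball_of_continuous (by fun_prop)),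
      Finset.sum_congr rfl fun i _ => Finset.sum_congr rfl fun j _ => integral_const_mul _ _,
      Finset.sum_congr rfl fun i _ => Finset.sum_congr rfl fun j _ => by rw [moment_pair hr i j]]
    simp only [mul_ite, mul_one, mul_zero, ite_mul, zero_mul, one_mul, Finset.sum_ite_eq,
      Finset.sum_ite_eq', Finset.mem_univ, if_true, Finset.mul_sum]
    exact Finset.sum_congr rfl fun i _ => by ring
  have pQL : (∫ y in Metric.closedBall (0 : EuclideanSpace ℝ (Fin n)) r,
      (∑ i, ∑ j, y i * H i j * y j) * (∑ i, g i * y i)) = 0 := by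
    rw [show (fun y : EuclideanSpace ℝ (Fin n) =>
        (∑ i, ∑ j, y i * H i j * y j) * (∑ i, g i * y i)) =
        fun y : EuclideanSpace ℝ (Fin n) =>
          ∑ i, ∑ j, ∑ k, (H j k * g i) * (y i * y j * y k) from
      funext fun y => by
        simp only [Finset.sum_mul, Finset.mul_sum]
        exact Finset.sum_congr rfl fun i _ => Finset.sum_congr rfl fun j _ =>
          Finset.sum_congr rfl fun k _ => by ring]
    rw [integral_finset_sum _ (fun i _ => integrableOn_ball_of_continuous (by fun_prop)),
      Finset.sum_congr rfl fun i _ =>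
        integral_finset_sum _ (fun j _ => integrableOn_ball_of_continuous (by fun_prop)),
      Finset.sum_congr rfl fun i _ => Finset.sum_congr rfl fun j _ =>
        integral_finset_sum _ (fun k _ => integrableOn_ball_of_continuous (by fun_prop)),
      Finset.sum_congr rfl fun i _ => Finset.sum_congr rfl fun j _ => Finset.sum_congr rfl fun k _ =>
        integral_const_mul _ _,
      Finset.sum_congr rfl fun i _ => Finset.sum_congr rfl fun j _ => Finset.sum_congr rfl fun k _ =>
        by rw [moment_triple r i j k]]
    simp
  have pQ : (∫ y in Metric.closedBall (0 : EuclideanSpace ℝ (Fin n)) r,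
      ∑ i, ∑ j, y i * H i j * y j) =
      (volume (Metric.closedBall (0 : EuclideanSpace ℝ (Fin n)) 1)).toReal / ((n:ℝ)+2) *
        r ^ (n+2) * H.trace := by
    rw [show (fun y : EuclideanSpace ℝ (Fin n) => ∑ i, ∑ j, y i * H i j * y j) =
        fun y : EuclideanSpace ℝ (Fin n) => ∑ i, ∑ j, H i j * (y i * y j) from
      funext fun y => Finset.sum_congr rfl fun i _ => Finset.sum_congr rfl fun j _ => by ring]
    rw [integral_finset_sum _ (fun i _ => integrableOn_ball_of_continuous (by fun_prop)),
      Finset.sum_congr rfl fun i _ =>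
        integral_finset_sum _ (fun j _ => integrableOn_ball_of_continuous (by fun_prop)),
      Finset.sum_congr rfl fun i _ => Finset.sum_congr rfl fun j _ => integral_const_mul (H i j) _,
      Finset.sum_congr rfl fun i _ => Finset.sum_congr rfl fun j _ => by rw [moment_pair hr i j]]
    simp only [mul_ite, mul_one, mul_zero, ite_mul, zero_mul, one_mul, Finset.sum_ite_eq,
      Finset.sum_ite_eq', Finset.mem_univ, if_true, Matrix.trace, Matrix.diag, Finset.mul_sum]
    exact Finset.sum_congr rfl fun i _ => by ring
  have pL : (∫ y in Metric.closedBall (0 : EuclideanSpace ℝ (Fin n)) r, ∑ i, g i * y i) = 0 := by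
    rw [integral_finset_sum _ (fun i _ => integrableOn_ball_of_continuous (by fun_prop)),
      Finset.sum_congr rfl fun i _ => integral_const_mul _ _,
      Finset.sum_congr rfl fun i _ => by rw [integral_single_eq_zero r i]]
    simp
  have pC : (∫ _y in Metric.closedBall (0 : EuclideanSpace ℝ (Fin n)) r, c ^ 2) =
      ((volume (Metric.closedBall (0 : EuclideanSpace ℝ (Fin n)) 1)).toReal * r ^ n) * c ^ 2 := by
    rw [setIntegral_const, measureReal_def, hvol, smul_eq_mul]
  rw [integral_const_mul, integral_const_mul, integral_const_mul, pQ2, pL2, pQL, pQ, pL, pC, hVn]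
  have h2 : ((n:ℝ) + 2) ≠ 0 := by positivity
  have h4 : ((n:ℝ) + 4) ≠ 0 := by positivity
  rw [pow_add, pow_add]
  field_simp
  ring
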